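/- Let M ≥ 0 and 0 ≤ p ≤ M be integers. The number of lists ε = (ε_1, …, ε_{2M}) with each ε_i ∈ {+1, −1}, all partial sums ε_1 + ⋯ + ε_k ≥ 0 (for 1 ≤ k ≤ 2M), and total sum ε_1 + ⋯ + ε_{2M} = 2p, equals binom(2M, M+p) − binom(2M, M+p+1). -/

import Mathlib

open Finset

def pathSet (n : ℕ) (h : ℤ) : Set (Fin n → ℤ) :=
  {ε : Fin n → ℤ |
    (∀ i, ε i = 1 ∨ ε i = -1) ∧
    (∀ k : ℕ, 1 ≤ k → k ≤ n →
      0 ≤ ∑ i ∈ Finset.univ.filter (fun i : Fin n => (i : ℕ) < k), ε i) ∧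
    (∑ i, ε i) = h}

lemma pathSet_finite (n : ℕ) (h : ℤ) : (pathSet n h).Finite := by
  apply Set.Finite.subset (Set.Finite.pi (fun _ : Fin n => (Set.finite_singleton (1:ℤ)).insert (-1)))
  intro ε hε
  intro i _
  rcases hε.1 i with h1 | h1 <;> simp [h1]

lemma pathSet_neg (n : ℕ) (h : ℤ) (hh : h < 0) : pathSet n h = ∅ := by
  ext ε
  simp only [Set.mem_empty_iff_false, iff_false]
  rintro ⟨hstep, hpart, hsum⟩
  rcases Nat.eq_zero_or_pos n with rfl | hn
  · simp at hsum; omega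
  · have h2 := hpart n hn le_rfl
    rw [Finset.filter_true_of_mem (fun i _ => i.isLt)] at h2
    rw [hsum] at h2
    omega

lemma pathSet_big (n : ℕ) (h : ℤ) (hh : (n : ℤ) < h) : pathSet n h = ∅ := by
  ext ε
  simp only [Set.mem_empty_iff_false, iff_false]
  rintro ⟨hstep, -, hsum⟩
  have h2 : ∑ i, ε i ≤ ∑ _i : Fin n, (1:ℤ) :=
    Finset.sum_le_sum (fun i _ => by rcases hstep i with h1 | h1 <;> simp [h1])
  simp only [Finset.sum_const, Finset.card_univ, Fintype.card_fin, smul_eq_mul, mul_one, nsmul_eq_mul] at h2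
  rw [hsum] at h2
  omega

lemma partial_snoc (n : ℕ) (ε : Fin n → ℤ) (c : ℤ) (k : ℕ) (hk : k ≤ n) :
    ∑ i ∈ Finset.univ.filter (fun i : Fin (n+1) => (i : ℕ) < k), Fin.snoc ε c i
      = ∑ i ∈ Finset.univ.filter (fun i : Fin n => (i : ℕ) < k), ε i := by
  rw [Finset.sum_filter, Finset.sum_filter, Fin.sum_univ_castSucc]
  simp only [Fin.coe_castSucc, Fin.snoc_castSucc, Fin.snoc_last, Fin.val_last]
  rw [if_neg (by omega)]
  ring

lemma total_snoc (n : ℕ) (ε : Fin n → ℤ) (c : ℤ) :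
    ∑ i, Fin.snoc ε c i = (∑ i, ε i) + c := by
  rw [Fin.sum_univ_castSucc]
  simp

lemma pathSet_succ (n : ℕ) (h : ℤ) (hh : 0 ≤ h) :
    pathSet (n+1) h = (fun ε => Fin.snoc ε (1:ℤ)) '' pathSet n (h-1)
      ∪ (fun ε => Fin.snoc ε (-1:ℤ)) '' pathSet n (h+1) := by
  have mem_snoc : ∀ (c : ℤ), (c = 1 ∨ c = -1) → ∀ (ε' : Fin n → ℤ), (∀ i, ε' i = 1 ∨ ε' i = -1) →
      (∀ k : ℕ, 1 ≤ k → k ≤ n →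
        0 ≤ ∑ i ∈ Finset.univ.filter (fun i : Fin n => (i : ℕ) < k), ε' i) →
      (∑ i, ε' i) + c = h →
      Fin.snoc ε' c ∈ pathSet (n+1) h := by
    intro c hc ε' hstep hpart hsum
    refine ⟨?_, ?_, ?_⟩
    · intro i
      refine Fin.lastCases ?_ ?_ i
      · simp only [Fin.snoc_last]
        exact hc
      · intro j
        simp only [Fin.snoc_castSucc]
        exact hstep j
    · intro k hk1 hk2
      rcases Nat.lt_or_ge k (n+1) with hk | hk
      · rw [partial_snoc n ε' c k (by omega)]
        exact hpart k hk1 (by omega)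
      · have hk' : k = n + 1 := by omega
        rw [Finset.filter_true_of_mem (fun i _ => by omega)]
        rw [total_snoc, hsum]
        exact hh
    · rw [total_snoc, hsum]
  ext ε
  constructor
  · rintro ⟨hstep, hpart, hsum⟩
    have hinit : ∀ k : ℕ, 1 ≤ k → k ≤ n →
        0 ≤ ∑ i ∈ Finset.univ.filter (fun i : Fin n => (i : ℕ) < k), Fin.init ε i := by
      intro k hk1 hk2
      have := hpart k hk1 (by omega)
      rwa [← Fin.snoc_init_self ε, partial_snoc n (Fin.init ε) _ k hk2] at this
    have htot : (∑ i, Fin.init ε i) + ε (Fin.last n) = h := by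
      rw [← hsum, Fin.sum_univ_castSucc]
      rfl
    rcases hstep (Fin.last n) with hl | hl
    · left
      refine ⟨Fin.init ε, ⟨fun i => hstep i.castSucc, hinit, by omega⟩, ?_⟩
      rw [← hl]
      exact Fin.snoc_init_self ε
    · right
      refine ⟨Fin.init ε, ⟨fun i => hstep i.castSucc, hinit, by omega⟩, ?_⟩
      rw [← hl]
      exact Fin.snoc_init_self ε
  · rintro (⟨ε', ⟨hstep, hpart, hsum⟩, rfl⟩ | ⟨ε', ⟨hstep, hpart, hsum⟩, rfl⟩)
    · exact mem_snoc 1 (Or.inl rfl) ε' hstep hpart (by omega)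
    · exact mem_snoc (-1) (Or.inr rfl) ε' hstep hpart (by omega)

lemma snoc_inj (n : ℕ) (c : ℤ) : Function.Injective (fun ε : Fin n → ℤ => (Fin.snoc ε c : Fin (n+1) → ℤ)) := by
  intro a b hab
  have := congrArg Fin.init hab
  simpa [Fin.init_snoc] using this

lemma pathSet_card_succ (n : ℕ) (h : ℤ) (hh : 0 ≤ h) :
    (pathSet (n+1) h).ncard = (pathSet n (h-1)).ncard + (pathSet n (h+1)).ncard := by
  rw [pathSet_succ n h hh]
  rw [Set.ncard_union_eq ?_ ((pathSet_finite n (h-1)).image _) ((pathSet_finite n (h+1)).image _)]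
  · rw [Set.ncard_image_of_injective _ (snoc_inj n 1), Set.ncard_image_of_injective _ (snoc_inj n (-1))]
  · rw [Set.disjoint_left]
    rintro x ⟨a, -, rfl⟩ ⟨b, -, hb⟩
    have := congrFun hb (Fin.last n)
    simp [Fin.snoc_last] at this

lemma choose_anti (n k : ℕ) (hk : n ≤ 2*k+1) : Nat.choose n (k+1) ≤ Nat.choose n k := by
  have h := Nat.choose_succ_right_eq n k
  have h2 : Nat.choose n (k+1) * (k+1) ≤ Nat.choose n k * (k+1) := by
    rw [h]; exact Nat.mul_le_mul_left _ (by omega)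
  exact Nat.le_of_mul_le_mul_right h2 (by omega)

lemma pathSet_zero : pathSet 0 0 = Set.univ := by
  ext ε
  simp only [Set.mem_univ, iff_true, pathSet, Set.mem_setOf_eq]
  refine ⟨fun i => i.elim0, fun k hk1 hk2 => by omega, by simp⟩

lemma pathSet_card (n : ℕ) : ∀ h m : ℕ, n + h = 2 * m →
    (pathSet n (h : ℤ)).ncard = Nat.choose n m - Nat.choose n (m+1) := by
  induction n with
  | zero =>
    intro h m hm
    rcases Nat.eq_zero_or_pos h with rfl | hh
    · obtain rfl : m = 0 := by omega
      rw [Nat.cast_zero, pathSet_zero, Set.ncard_univ]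
      simp [Nat.card_unique]
    · rw [pathSet_big 0 h (by exact_mod_cast hh)]
      obtain ⟨m', rfl⟩ : ∃ m', m = m' + 1 := ⟨m - 1, by omega⟩
      simp [Nat.choose_eq_zero_of_lt (by omega : 0 < m' + 1)]
  | succ n ih =>
    intro h m hm
    rcases Nat.eq_zero_or_pos h with rfl | hh
    · -- h = 0, last step must be -1
      obtain ⟨m', rfl⟩ : ∃ m', m = m' + 1 := ⟨m - 1, by omega⟩
      have hn : n = 2 * m' + 1 := by omega
      rw [Nat.cast_zero, pathSet_card_succ n 0 le_rfl,
        pathSet_neg n (0 - 1) (by norm_num), Set.ncard_empty]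
      have h1 := ih 1 (m' + 1) (by omega)
      rw [Nat.cast_one] at h1
      rw [show (0:ℤ) + 1 = 1 from by norm_num, h1]
      have hsymm : Nat.choose n (m' + 1) = Nat.choose n m' := by
        have := Nat.choose_symm (show m' ≤ n by omega)
        rwa [show n - m' = m' + 1 by omega] at this
      have ha1 : Nat.choose n (m' + 1) ≤ Nat.choose n m' := hsymm.le
      have ha2 : Nat.choose n (m' + 1 + 1) ≤ Nat.choose n (m' + 1) := choose_anti n (m'+1) (by omega)
      rw [Nat.choose_succ_succ' (n:ℕ) m', Nat.choose_succ_succ' (n:ℕ) (m'+1)]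
      omega
    · obtain ⟨h', rfl⟩ : ∃ h'', h = h'' + 1 := ⟨h - 1, by omega⟩
      obtain ⟨m', rfl⟩ : ∃ m', m = m' + 1 := ⟨m - 1, by omega⟩
      rw [pathSet_card_succ n ((h' + 1 : ℕ) : ℤ) (by positivity)]
      have e1 : ((h' + 1 : ℕ) : ℤ) - 1 = ((h' : ℕ) : ℤ) := by push_cast; ring
      have e2 : ((h' + 1 : ℕ) : ℤ) + 1 = ((h' + 2 : ℕ) : ℤ) := by push_cast; ring
      rw [e1, e2, ih h' m' (by omega), ih (h' + 2) (m' + 1) (by omega)]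
      have ha1 : Nat.choose n (m' + 1) ≤ Nat.choose n m' := choose_anti n m' (by omega)
      have ha2 : Nat.choose n (m' + 1 + 1) ≤ Nat.choose n (m' + 1) := choose_anti n (m'+1) (by omega)
      rw [Nat.choose_succ_succ' (n:ℕ) m', Nat.choose_succ_succ' (n:ℕ) (m'+1)]
      omega

/-- Ballot-type count: the number of `±1`-sequences of length `2M` with all partial sums
nonnegative and total sum `2p` is `binom(2M, M+p) − binom(2M, M+p+1)`. -/
theorem ballot_count (M p : ℕ) (hp : p ≤ M) :
    Set.ncard {ε : Fin (2 * M) → ℤ |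
        (∀ i, ε i = 1 ∨ ε i = -1) ∧
        (∀ k : ℕ, 1 ≤ k → k ≤ 2 * M →
          0 ≤ ∑ i ∈ Finset.univ.filter (fun i : Fin (2 * M) => (i : ℕ) < k), ε i) ∧
        (∑ i, ε i) = 2 * (p : ℤ)} =
      Nat.choose (2 * M) (M + p) - Nat.choose (2 * M) (M + p + 1) := by
  have := pathSet_card (2 * M) (2 * p) (M + p) (by ring)
  have e : ((2 * p : ℕ) : ℤ) = 2 * (p : ℤ) := by push_cast; ring
  rw [e] at this
  exact this
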